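/- Let h : ℝ → ℝ be a continuous function that is periodic with period π/2. Define H : ℝ → ℝ by H(θ) = (1/4) ∫_{-π/4}^{π/4} |sin(2(θ - θ'))| h(θ') dθ'. Then H is twice differentiable and satisfies the ODE 4·H(θ) + H''(θ) = h(θ) for every θ ∈ ℝ. -/

import Mathlib

open Real MeasureTheory intervalIntegral

/-- If `h : ℝ → ℝ` is continuous and periodic with period `π/2`, and
`H θ = (1/4) ∫_{-π/4}^{π/4} |sin(2(θ - θ'))| h(θ') dθ'`, then `H` is twice
differentiable and `4 H(θ) + H''(θ) = h(θ)` for every `θ`. -/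
theorem kernel_solves_elliptic_ode
    (h : ℝ → ℝ) (hcont : Continuous h)
    (hper : ∀ θ : ℝ, h (θ + π / 2) = h θ)
    (H : ℝ → ℝ)
    (hH : ∀ θ : ℝ, H θ =
      (1 / 4) * ∫ θ' in (-(π / 4))..(π / 4), |Real.sin (2 * (θ - θ'))| * h θ') :
    ∀ θ : ℝ, DifferentiableAt ℝ H θ ∧ DifferentiableAt ℝ (deriv H) θ ∧
      4 * H θ + deriv (deriv H) θ = h θ := by
  -- continuity of the two basic integrands
  have hc : Continuous fun t : ℝ => Real.cos (2 * t) * h t :=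
    (Real.continuous_cos.comp (continuous_const.mul continuous_id)).mul hcont
  have hs : Continuous fun t : ℝ => Real.sin (2 * t) * h t :=
    (Real.continuous_sin.comp (continuous_const.mul continuous_id)).mul hcont
  -- antiderivatives
  set F : ℝ → ℝ := fun θ => ∫ t in (0:ℝ)..θ, Real.cos (2 * t) * h t with hFdef
  set G : ℝ → ℝ := fun θ => ∫ t in (0:ℝ)..θ, Real.sin (2 * t) * h t with hGdef
  have hF : ∀ x : ℝ, HasDerivAt F (Real.cos (2 * x) * h x) x := fun x =>
    intervalIntegral.integral_hasDerivAt_right (hc.intervalIntegrable 0 x)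
      (hc.stronglyMeasurableAtFilter _ _) hc.continuousAt
  have hG : ∀ x : ℝ, HasDerivAt G (Real.sin (2 * x) * h x) x := fun x =>
    intervalIntegral.integral_hasDerivAt_right (hs.intervalIntegrable 0 x)
      (hs.stronglyMeasurableAtFilter _ _) hs.continuousAt
  have hFsub : ∀ a b : ℝ, (∫ t in a..b, Real.cos (2 * t) * h t) = F b - F a := by
    intro a b
    exact (intervalIntegral.integral_interval_sub_left (hc.intervalIntegrable 0 b)
      (hc.intervalIntegrable 0 a)).symm
  have hGsub : ∀ a b : ℝ, (∫ t in a..b, Real.sin (2 * t) * h t) = G b - G a := by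
    intro a b
    exact (intervalIntegral.integral_interval_sub_left (hs.intervalIntegrable 0 b)
      (hs.intervalIntegrable 0 a)).symm
  set P : ℝ → ℝ := fun x => 2 * F x - F (x - π / 4) - F (x + π / 4) with hPdef
  set Q : ℝ → ℝ := fun x => G (x + π / 4) + G (x - π / 4) - 2 * G x with hQdef
  -- h shifted by π/4 forwards and backwards agree
  have hshift : ∀ x : ℝ, h (x + π / 4) = h (x - π / 4) := by
    intro x
    have := hper (x - π / 4)
    rwa [show x - π / 4 + π / 2 = x + π / 4 by ring] at this
  -- derivative of P
  have hP : ∀ x : ℝ, HasDerivAt P (2 * (Real.cos (2 * x) * h x)) x := by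
    intro x
    have d1 : HasDerivAt (fun y : ℝ => F (y - π / 4))
        (Real.cos (2 * (x - π / 4)) * h (x - π / 4)) x := by
      simpa [Function.comp_def] using (hF (x - π / 4)).comp x ((hasDerivAt_id x).sub_const (π / 4))
    have d2 : HasDerivAt (fun y : ℝ => F (y + π / 4))
        (Real.cos (2 * (x + π / 4)) * h (x + π / 4)) x := by
      simpa [Function.comp_def] using (hF (x + π / 4)).comp x ((hasDerivAt_id x).add_const (π / 4))
    have d := (((hF x).const_mul 2).sub d1).sub d2
    have e : 2 * (Real.cos (2 * x) * h x) -
        Real.cos (2 * (x - π / 4)) * h (x - π / 4) -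
        Real.cos (2 * (x + π / 4)) * h (x + π / 4) = 2 * (Real.cos (2 * x) * h x) := by
      rw [show 2 * (x - π / 4) = 2 * x - π / 2 by ring,
        show 2 * (x + π / 4) = 2 * x + π / 2 by ring, Real.cos_sub, Real.cos_add,
        Real.cos_pi_div_two, Real.sin_pi_div_two, hshift x]
      ring
    exact e ▸ d
  -- derivative of Q
  have hQ : ∀ x : ℝ, HasDerivAt Q (-(2 * (Real.sin (2 * x) * h x))) x := by
    intro x
    have d1 : HasDerivAt (fun y : ℝ => G (y - π / 4))
        (Real.sin (2 * (x - π / 4)) * h (x - π / 4)) x := by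
      simpa [Function.comp_def] using (hG (x - π / 4)).comp x ((hasDerivAt_id x).sub_const (π / 4))
    have d2 : HasDerivAt (fun y : ℝ => G (y + π / 4))
        (Real.sin (2 * (x + π / 4)) * h (x + π / 4)) x := by
      simpa [Function.comp_def] using (hG (x + π / 4)).comp x ((hasDerivAt_id x).add_const (π / 4))
    have d := (d2.add d1).sub ((hG x).const_mul 2)
    have e : Real.sin (2 * (x + π / 4)) * h (x + π / 4) +
        Real.sin (2 * (x - π / 4)) * h (x - π / 4) -
        2 * (Real.sin (2 * x) * h x) = -(2 * (Real.sin (2 * x) * h x)) := by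
      rw [show 2 * (x - π / 4) = 2 * x - π / 2 by ring,
        show 2 * (x + π / 4) = 2 * x + π / 2 by ring, Real.sin_sub, Real.sin_add,
        Real.cos_pi_div_two, Real.sin_pi_div_two, hshift x]
      ring
    exact e ▸ d
  -- closed form for H
  set Hc : ℝ → ℝ := fun x =>
    (1 / 4) * (Real.sin (2 * x) * P x + Real.cos (2 * x) * Q x) with hHcdef
  have hkey : ∀ θ : ℝ, H θ = Hc θ := by
    intro θ
    -- the integrand, as a function of θ', is π/2-periodic
    have per : Function.Periodic (fun θ' => |Real.sin (2 * (θ - θ'))| * h θ') (π / 2) := by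
      intro x
      simp only
      rw [show 2 * (θ - (x + π / 2)) = 2 * (θ - x) - π by ring, Real.sin_sub_pi, abs_neg,
        hper x]
    have habs : Continuous fun θ' : ℝ => |Real.sin (2 * (θ - θ'))| * h θ' :=
      ((Real.continuous_sin.comp (continuous_const.mul (continuous_const.sub continuous_id))).abs).mul hcont
    -- shift the integration interval
    have shift : (∫ θ' in (-(π / 4))..(π / 4), |Real.sin (2 * (θ - θ'))| * h θ')
        = ∫ θ' in (θ - π / 4)..(θ + π / 4), |Real.sin (2 * (θ - θ'))| * h θ' := by
      have := per.intervalIntegral_add_eq (θ - π / 4) (-(π / 4))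
      rw [show θ - π / 4 + π / 2 = θ + π / 4 by ring,
        show -(π / 4) + π / 2 = π / 4 by ring] at this
      exact this.symm
    -- split at θ
    have split : (∫ θ' in (θ - π / 4)..(θ + π / 4), |Real.sin (2 * (θ - θ'))| * h θ')
        = (∫ θ' in (θ - π / 4)..θ, |Real.sin (2 * (θ - θ'))| * h θ')
          + ∫ θ' in θ..(θ + π / 4), |Real.sin (2 * (θ - θ'))| * h θ' :=
      (intervalIntegral.integral_add_adjacent_intervals
        (habs.intervalIntegrable _ _) (habs.intervalIntegrable _ _)).symm
    have pi4 : (0:ℝ) < π / 4 := by positivity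
    -- first piece
    have I1 : (∫ θ' in (θ - π / 4)..θ, |Real.sin (2 * (θ - θ'))| * h θ')
        = Real.sin (2 * θ) * (F θ - F (θ - π / 4))
          - Real.cos (2 * θ) * (G θ - G (θ - π / 4)) := by
      have e1 : ∀ θ' ∈ Set.uIcc (θ - π / 4) θ, |Real.sin (2 * (θ - θ'))| * h θ'
          = Real.sin (2 * θ) * (Real.cos (2 * θ') * h θ')
            - Real.cos (2 * θ) * (Real.sin (2 * θ') * h θ') := by
        intro θ' hθ'
        rw [Set.uIcc_of_le (by linarith)] at hθ'
        have h1 : 0 ≤ 2 * (θ - θ') := by linarith [hθ'.2]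
        have h2 : 2 * (θ - θ') ≤ π := by nlinarith [hθ'.1, pi_pos]
        rw [abs_of_nonneg (Real.sin_nonneg_of_nonneg_of_le_pi h1 h2),
          show 2 * (θ - θ') = 2 * θ - 2 * θ' by ring, Real.sin_sub]
        ring
      rw [intervalIntegral.integral_congr e1,
        intervalIntegral.integral_sub ((hc.intervalIntegrable _ _).const_mul _)
          ((hs.intervalIntegrable _ _).const_mul _),
        intervalIntegral.integral_const_mul, intervalIntegral.integral_const_mul,
        hFsub, hGsub]
    -- second piece
    have I2 : (∫ θ' in θ..(θ + π / 4), |Real.sin (2 * (θ - θ'))| * h θ')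
        = Real.cos (2 * θ) * (G (θ + π / 4) - G θ)
          - Real.sin (2 * θ) * (F (θ + π / 4) - F θ) := by
      have e2 : ∀ θ' ∈ Set.uIcc θ (θ + π / 4), |Real.sin (2 * (θ - θ'))| * h θ'
          = Real.cos (2 * θ) * (Real.sin (2 * θ') * h θ')
            - Real.sin (2 * θ) * (Real.cos (2 * θ') * h θ') := by
        intro θ' hθ'
        rw [Set.uIcc_of_le (by linarith)] at hθ'
        have h1 : 0 ≤ 2 * (θ' - θ) := by linarith [hθ'.1]
        have h2 : 2 * (θ' - θ) ≤ π := by nlinarith [hθ'.2, pi_pos]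
        have : |Real.sin (2 * (θ - θ'))| = Real.sin (2 * (θ' - θ)) := by
          rw [show 2 * (θ - θ') = -(2 * (θ' - θ)) by ring, Real.sin_neg, abs_neg,
            abs_of_nonneg (Real.sin_nonneg_of_nonneg_of_le_pi h1 h2)]
        rw [this, show 2 * (θ' - θ) = 2 * θ' - 2 * θ by ring, Real.sin_sub]
        ring
      rw [intervalIntegral.integral_congr e2,
        intervalIntegral.integral_sub ((hs.intervalIntegrable _ _).const_mul _)
          ((hc.intervalIntegrable _ _).const_mul _),
        intervalIntegral.integral_const_mul, intervalIntegral.integral_const_mul,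
        hFsub, hGsub]
    rw [hH θ, shift, split, I1, I2, hHcdef]
    simp only [hPdef, hQdef]
    ring
  have hHeq : H = Hc := funext hkey
  subst hHeq
  -- derivatives of sin(2x), cos(2x)
  have h2x : ∀ x : ℝ, HasDerivAt (fun y : ℝ => 2 * y) 2 x := by
    intro x
    simpa using (hasDerivAt_id x).const_mul 2
  have hsin2 : ∀ x : ℝ, HasDerivAt (fun y : ℝ => Real.sin (2 * y)) (2 * Real.cos (2 * x)) x := by
    intro x
    have := (Real.hasDerivAt_sin (2 * x)).comp x (h2x x)
    refine this.congr_deriv (Eq.symm ?_)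
    ring
  have hcos2 : ∀ x : ℝ, HasDerivAt (fun y : ℝ => Real.cos (2 * y))
      (-(2 * Real.sin (2 * x))) x := by
    intro x
    have := (Real.hasDerivAt_cos (2 * x)).comp x (h2x x)
    refine this.congr_deriv (Eq.symm ?_)
    ring
  -- first derivative of Hc
  set H1 : ℝ → ℝ := fun x =>
    (1 / 2) * (Real.cos (2 * x) * P x - Real.sin (2 * x) * Q x) with hH1def
  have hHc1 : ∀ x : ℝ, HasDerivAt Hc (H1 x) x := by
    intro x
    have d := ((((hsin2 x).mul (hP x)).add ((hcos2 x).mul (hQ x))).const_mul (1 / 4))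
    refine d.congr_deriv (Eq.symm ?_)
    simp only [hH1def]
    ring
  have hderiv1 : deriv Hc = H1 := funext fun x => (hHc1 x).deriv
  -- second derivative
  have hHc2 : ∀ x : ℝ, HasDerivAt H1 (h x - 4 * Hc x) x := by
    intro x
    have d := ((((hcos2 x).mul (hP x)).sub ((hsin2 x).mul (hQ x))).const_mul (1 / 2))
    refine d.congr_deriv (Eq.symm ?_)
    simp only [hHcdef]
    have pyth := Real.sin_sq_add_cos_sq (2 * x)
    linear_combination (-(h x)) * pyth
  intro θ
  refine ⟨(hHc1 θ).differentiableAt, ?_, ?_⟩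
  · rw [hderiv1]; exact (hHc2 θ).differentiableAt
  · rw [hderiv1, (hHc2 θ).deriv]; ring
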